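/- Let 0 < α ≤ 1 and β > 0. If a function f : [0,∞) → ℝ is α-differentiable at a point t₀ > 0 in the sense of the local M-derivative (i.e., the limit defining 𝒟_M^{α,β} f(t₀) exists), then f is continuous at t₀. -/

import Mathlib

open Filter Topology

/-- One-parameter Mittag-Leffler function `E_β(x) = ∑_{k=0}^∞ x^k / Γ(βk+1)`. -/
noncomputable def mittagLeffler (β x : ℝ) : ℝ :=
  ∑' k : ℕ, x ^ k / Real.Gamma (β * k + 1)

/-- `f` has local M-derivative `L` of order `α` with parameter `β` at `t`, i.e.
`lim_{ε→0} (f (t · E_β (ε t^{-α})) - f t)/ε = L`. -/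
def HasLocalMDerivAt (α β : ℝ) (f : ℝ → ℝ) (t L : ℝ) : Prop :=
  Tendsto (fun ε : ℝ => (f (t * mittagLeffler β (ε * t ^ (-α))) - f t) / ε)
    (𝓝[≠] (0 : ℝ)) (𝓝 L)

/-- Uniform lower bound for `Γ` on `[1, ∞)`. -/
lemma gamma_lower (s : ℝ) (hs : 1 ≤ s) : (1 : ℝ) / 6 ≤ Real.Gamma s := by
  have h2 : ∀ x : ℝ, 2 ≤ x → 1 ≤ Real.Gamma x := by
    intro x hx
    rcases eq_or_lt_of_le hx with h | h
    · rw [← h, Real.Gamma_two]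
    · have := Real.Gamma_strictMonoOn_Ici (Set.mem_Ici.2 le_rfl)
        (Set.mem_Ici.2 hx) h
      rw [Real.Gamma_two] at this
      exact this.le
  rcases le_or_gt 2 s with h | h
  · linarith [h2 s h]
  · have hs0 : 0 < s := by linarith
    have hΓpos : 0 < Real.Gamma s := Real.Gamma_pos_of_pos hs0
    have e1 : Real.Gamma (s + 1) = s * Real.Gamma s := Real.Gamma_add_one hs0.ne'
    have e2 : Real.Gamma (s + 1 + 1) = (s + 1) * Real.Gamma (s + 1) :=
      Real.Gamma_add_one (by positivity)
    have h3 : 1 ≤ Real.Gamma (s + 1 + 1) := h2 _ (by linarith)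
    rw [e2, e1] at h3
    have h6 : (s + 1) * (s * Real.Gamma s) ≤ 6 * Real.Gamma s := by
      nlinarith [mul_le_mul_of_nonneg_right
        (show (s + 1) * s ≤ 6 by nlinarith) hΓpos.le]
    linarith

/-- The coefficients of the Mittag-Leffler power series. -/
noncomputable def mlCoeff (β : ℝ) (n : ℕ) : ℝ := (Real.Gamma (β * n + 1))⁻¹

lemma mlCoeff_le (β : ℝ) (hβ : 0 < β) (n : ℕ) : |mlCoeff β n| ≤ 6 := by
  have h1 : (1 : ℝ) ≤ β * n + 1 := by
    have : (0:ℝ) ≤ β * n := by positivity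
    linarith
  have h := gamma_lower _ h1
  have hpos : 0 < Real.Gamma (β * n + 1) := Real.Gamma_pos_of_pos (by linarith)
  rw [mlCoeff, abs_of_pos (by positivity)]
  rw [inv_le_comm₀ hpos (by norm_num)]
  linarith

lemma ml_summable (β : ℝ) (hβ : 0 < β) {y : ℝ} (hy : |y| < 1) :
    Summable (fun n : ℕ => y ^ n / Real.Gamma (β * n + 1)) := by
  apply Summable.of_norm_bounded (g := fun n : ℕ => 6 * |y| ^ n)
    ((summable_geometric_of_lt_one (abs_nonneg y) hy).mul_left 6)
  intro n
  have h := mlCoeff_le β hβ n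
  rw [Real.norm_eq_abs, div_eq_mul_inv, abs_mul, abs_pow]
  have : |(Real.Gamma (β * n + 1))⁻¹| ≤ 6 := h
  calc |y| ^ n * |(Real.Gamma (β * n + 1))⁻¹| ≤ |y| ^ n * 6 := by
        exact mul_le_mul_of_nonneg_left this (by positivity)
    _ = 6 * |y| ^ n := by ring

lemma ml_hasFPowerSeries (β : ℝ) (hβ : 0 < β) :
    HasFPowerSeriesOnBall (mittagLeffler β)
      (FormalMultilinearSeries.ofScalars ℝ (mlCoeff β)) 0 1 := by
  constructor
  · apply FormalMultilinearSeries.le_radius_of_bound _ 6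
    intro n
    have hn : ‖FormalMultilinearSeries.ofScalars ℝ (mlCoeff β) n‖ ≤ 6 := by
      have : ‖FormalMultilinearSeries.ofScalars ℝ (mlCoeff β) n‖
          = |mlCoeff β n| := by
        rw [FormalMultilinearSeries.ofScalars]
        have := norm_smul (mlCoeff β n) (ContinuousMultilinearMap.mkPiAlgebraFin ℝ n ℝ)
        rw [this, ContinuousMultilinearMap.norm_mkPiAlgebraFin, mul_one,
          Real.norm_eq_abs]
      rw [this]
      exact mlCoeff_le β hβ n
    simpa using hn
  · norm_num
  · intro y hy
    simp only [EMetric.mem_ball, edist_dist, Real.dist_eq, sub_zero] at hy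
    have hy1 : |y| < 1 := by
      by_contra h
      push_neg at h
      have : (1 : ENNReal) ≤ ENNReal.ofReal |y| := by
        rw [← ENNReal.ofReal_one]
        exact ENNReal.ofReal_le_ofReal h
      exact absurd hy (not_lt.2 this)
    have hsum := ml_summable β hβ hy1
    have := hsum.hasSum
    have heq : (fun n : ℕ => FormalMultilinearSeries.ofScalars ℝ (mlCoeff β) n
        fun _ => y) = fun n : ℕ => y ^ n / Real.Gamma (β * n + 1) := by
      funext n
      rw [FormalMultilinearSeries.ofScalars_apply_eq, smul_eq_mul, mlCoeff,
        div_eq_mul_inv, mul_comm]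
    rw [heq, zero_add]
    exact this

lemma ml_zero (β : ℝ) (hβ : 0 < β) : mittagLeffler β 0 = 1 := by
  rw [mittagLeffler, tsum_eq_single 0 (fun k hk => by simp [zero_pow hk])]
  norm_num [Real.Gamma_one]

/-- if `f` is α-differentiable at `t₀ > 0` in the sense of the local
M-derivative, then `f` is continuous at `t₀`. -/
theorem stmt0 (α β t₀ : ℝ) (hα0 : 0 < α) (hα1 : α ≤ 1) (hβ : 0 < β) (ht₀ : 0 < t₀)
    (f : ℝ → ℝ) (hf : ∃ L, HasLocalMDerivAt α β f t₀ L) :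
    ContinuousAt f t₀ := by
  obtain ⟨L, hL⟩ := hf
  set g : ℝ → ℝ := fun ε => t₀ * mittagLeffler β (ε * t₀ ^ (-α)) with hg
  -- derivative facts
  have hps : HasFPowerSeriesAt (mittagLeffler β)
      (FormalMultilinearSeries.ofScalars ℝ (mlCoeff β)) 0 :=
    (ml_hasFPowerSeries β hβ).hasFPowerSeriesAt
  have hd : HasStrictDerivAt (mittagLeffler β)
      ((FormalMultilinearSeries.ofScalars ℝ (mlCoeff β)).coeff 1) 0 :=
    hps.hasStrictDerivAt
  set d : ℝ := (FormalMultilinearSeries.ofScalars ℝ (mlCoeff β)).coeff 1 with hdd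
  have hdpos : 0 < d := by
    have : d = mlCoeff β 1 := by
      rw [hdd]
      simp [FormalMultilinearSeries.coeff, FormalMultilinearSeries.ofScalars]
    rw [this, mlCoeff]
    have : (0:ℝ) < Real.Gamma (β * 1 + 1) := Real.Gamma_pos_of_pos (by positivity)
    positivity
  have hc₁ : (0:ℝ) < t₀ ^ (-α) := Real.rpow_pos_of_pos ht₀ _
  have hinner : HasStrictDerivAt (fun ε : ℝ => ε * t₀ ^ (-α)) (t₀ ^ (-α)) 0 := by
    simpa using (hasStrictDerivAt_id (0:ℝ)).mul_const (t₀ ^ (-α))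
  have hcomp : HasStrictDerivAt (fun ε => mittagLeffler β (ε * t₀ ^ (-α)))
      (d * t₀ ^ (-α)) 0 := by
    have h0 : (fun ε : ℝ => ε * t₀ ^ (-α)) 0 = 0 := by simp
    exact HasStrictDerivAt.comp 0 (h0 ▸ hd) hinner
  have hgd : HasStrictDerivAt g (t₀ * (d * t₀ ^ (-α))) 0 := hcomp.const_mul t₀
  set D : ℝ := t₀ * (d * t₀ ^ (-α)) with hD
  have hDne : D ≠ 0 := by positivity
  -- g maps 𝓝 0 onto 𝓝 t₀
  have hg0 : g 0 = t₀ := by simp [hg, ml_zero β hβ]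
  have hmap : Filter.map g (𝓝 (0:ℝ)) = 𝓝 t₀ := by
    set e : ℝ ≃L[ℝ] ℝ := ContinuousLinearEquiv.unitsEquivAut ℝ (Units.mk0 D hDne)
    have hCLM : (e : ℝ →L[ℝ] ℝ) = ContinuousLinearMap.smulRight (1 : ℝ →L[ℝ] ℝ) D := by
      ext x
      simp [e, ContinuousLinearEquiv.unitsEquivAut, mul_comm]
    have hfd : HasStrictFDerivAt g (e : ℝ →L[ℝ] ℝ) 0 := by
      rw [hCLM]
      exact hgd
    have := hfd.map_nhds_eq_of_equiv
    rwa [hg0] at this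
  -- limit of f ∘ g along 𝓝 0
  have h1 : Tendsto (fun ε => f (g ε) - f t₀) (𝓝[≠] (0:ℝ)) (𝓝 0) := by
    have hmul : Tendsto (fun ε : ℝ =>
        ((f (g ε) - f t₀) / ε) * ε) (𝓝[≠] (0:ℝ)) (𝓝 (L * 0)) :=
      hL.mul (tendsto_id.mono_left nhdsWithin_le_nhds)
    rw [mul_zero] at hmul
    refine hmul.congr' ?_
    filter_upwards [self_mem_nhdsWithin] with ε hε
    exact div_mul_cancel₀ _ hε
  have h2 : Tendsto (fun ε => f (g ε)) (𝓝[≠] (0:ℝ)) (𝓝 (f t₀)) := by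
    have := h1.add_const (f t₀)
    simpa using this
  have h3 : Tendsto (fun ε => f (g ε)) (𝓝 (0:ℝ)) (𝓝 (f t₀)) := by
    rw [← nhdsNE_sup_pure (0:ℝ), tendsto_sup]
    refine ⟨h2, ?_⟩
    have : f (g 0) = f t₀ := by rw [hg0]
    simpa [this] using tendsto_pure_nhds (fun ε => f (g ε)) (0:ℝ)
  -- conclude
  unfold ContinuousAt
  rw [← hmap, tendsto_map'_iff]
  exact h3
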